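/- Let M be a compact smooth (C^∞) manifold of dimension n without boundary, and let f : M → ℝ^m be a smooth embedding (a smooth injective immersion that is a homeomorphism onto its image) with m ≥ 2n + 2. Then there exists a linear map L : ℝ^m → ℝ^{2n+1} such that L ∘ f is injective and is an immersion, i.e., no secant vector f(x) − f(y) with x ≠ y is mapped to zero by L and no nonzero tangent vector (mfderiv of f applied at any point) is mapped to zero by L. -/

import Mathlib

open MeasureTheory Set Function
open scoped Manifold ENNReal


/-- Image of a differentiable map from a lower-dimensional Euclidean space
on an open set has measure zero. -/
theorem lemA {d k : ℕ} (hdk : d < k)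
    (G : EuclideanSpace ℝ (Fin d) → EuclideanSpace ℝ (Fin k))
    (s : Set (EuclideanSpace ℝ (Fin d))) (hs : IsOpen s)
    (hG : DifferentiableOn ℝ G s) :
    volume (G '' s) = 0 := by
  -- projection E^k → E^d
  let P : EuclideanSpace ℝ (Fin k) →ₗ[ℝ] EuclideanSpace ℝ (Fin d) :=
    (WithLp.linearEquiv 2 ℝ (Fin d → ℝ)).symm.toLinearMap ∘ₗ
      LinearMap.funLeft ℝ ℝ (Fin.castLE hdk.le) ∘ₗ (WithLp.linearEquiv 2 ℝ (Fin k → ℝ)).toLinearMap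
  have hPsurj : Function.Surjective P :=
    (WithLp.linearEquiv 2 ℝ (Fin d → ℝ)).symm.surjective.comp
      ((LinearMap.funLeft_surjective_of_injective ℝ ℝ _ (Fin.castLE_injective hdk.le)).comp
        (WithLp.linearEquiv 2 ℝ (Fin k → ℝ)).surjective)
  let Pc : EuclideanSpace ℝ (Fin k) →L[ℝ] EuclideanSpace ℝ (Fin d) :=
    ⟨P, P.continuous_of_finiteDimensional⟩
  set t : Set (EuclideanSpace ℝ (Fin k)) := P ⁻¹' s with ht
  have hto : IsOpen t := hs.preimage Pc.continuous
  have himg : G '' s ⊆ (G ∘ P) '' t := by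
    rintro w ⟨a, ha, rfl⟩
    obtain ⟨z, hz⟩ := hPsurj a
    exact ⟨z, by simp only [t, Set.mem_preimage, hz]; exact ha, by simp [hz]⟩
  refine measure_mono_null himg ?_
  set F' : EuclideanSpace ℝ (Fin k) →
      EuclideanSpace ℝ (Fin k) →L[ℝ] EuclideanSpace ℝ (Fin k) :=
    fun z => (fderivWithin ℝ G s (P z)).comp Pc with hF'
  apply addHaar_image_eq_zero_of_det_fderivWithin_eq_zero volume (f' := F')
  · intro z hz
    have h1 : HasFDerivAt G (fderivWithin ℝ G s (P z)) (P z) := by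
      have := (hG (P z) hz).differentiableAt (hs.mem_nhds hz)
      rw [fderivWithin_of_isOpen hs hz]
      exact this.hasFDerivAt
    exact ((h1.comp z (Pc.hasFDerivAt)).hasFDerivWithinAt)
  · intro z hz
    have hrank : Module.finrank ℝ (LinearMap.range ((F' z).toLinearMap)) ≤ d := by
      have hle : LinearMap.range ((F' z).toLinearMap) ≤
          LinearMap.range ((fderivWithin ℝ G s (P z)).toLinearMap) := by
        rintro w ⟨v, rfl⟩
        exact ⟨Pc v, rfl⟩
      calc Module.finrank ℝ (LinearMap.range ((F' z).toLinearMap))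
          ≤ Module.finrank ℝ (LinearMap.range
            ((fderivWithin ℝ G s (P z)).toLinearMap)) :=
            Submodule.finrank_mono hle
        _ ≤ Module.finrank ℝ (EuclideanSpace ℝ (Fin d)) :=
            LinearMap.finrank_range_le _
        _ = d := finrank_euclideanSpace_fin
    rw [ContinuousLinearMap.det]
    by_contra hdet
    have hsurj : Function.Surjective ((F' z).toLinearMap) := by
      intro w
      obtain ⟨v, hv⟩ := ((F' z).toLinearMap.equivOfDetNeZero hdet).surjective w
      refine ⟨v, ?_⟩
      rw [← hv]
      simp [LinearMap.equivOfDetNeZero]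
    have : LinearMap.range ((F' z).toLinearMap) = ⊤ := LinearMap.range_eq_top.mpr hsurj
    rw [this] at hrank
    have : Module.finrank ℝ (⊤ : Submodule ℝ (EuclideanSpace ℝ (Fin k)))
        = k := by rw [finrank_top]; exact finrank_euclideanSpace_fin
    omega

theorem lemB {n k : ℕ} (hk : 2 * n + 1 < k)
    (G : ℝ × (EuclideanSpace ℝ (Fin n) × EuclideanSpace ℝ (Fin n)) → EuclideanSpace ℝ (Fin k))
    (s : Set (ℝ × (EuclideanSpace ℝ (Fin n) × EuclideanSpace ℝ (Fin n))))
    (hs : IsOpen s) (hG : DifferentiableOn ℝ G s) :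
    volume (G '' s) = 0 := by
  have hfr : Module.finrank ℝ (EuclideanSpace ℝ (Fin (2 * n + 1)))
      = Module.finrank ℝ (ℝ × (EuclideanSpace ℝ (Fin n) × EuclideanSpace ℝ (Fin n))) := by
    simp [finrank_euclideanSpace_fin, Module.finrank_prod, Module.finrank_self]
    ring
  let e := (LinearEquiv.ofFinrankEq _ _ hfr).toContinuousLinearEquiv
  have himg : G '' s = (G ∘ e) '' (e ⁻¹' s) := by
    rw [Set.image_comp, e.surjective.image_preimage]
  rw [himg]
  exact lemA hk _ _ (hs.preimage e.continuous) (hG.comp (e.toContinuousLinearMap.differentiable.differentiableOn) (fun z hz => hz))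

theorem lemProj {k : ℕ} (v : EuclideanSpace ℝ (Fin (k+1))) (hv : v ≠ 0) :
    ∃ π : EuclideanSpace ℝ (Fin (k+1)) →ₗ[ℝ] EuclideanSpace ℝ (Fin k),
      ∀ w, π w = 0 ↔ w ∈ Submodule.span ℝ {v} := by
  set K := (Submodule.span ℝ {v})ᗮ with hK
  have hfr : Module.finrank ℝ K = k := by
    have h1 : Module.finrank ℝ (Submodule.span ℝ {v}) = 1 := finrank_span_singleton hv
    have h2 := (Submodule.span ℝ {v}).finrank_add_finrank_orthogonal
      (E := EuclideanSpace ℝ (Fin (k+1)))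
    rw [h1, finrank_euclideanSpace_fin, ← hK] at h2
    omega
  have e : K ≃ₗ[ℝ] EuclideanSpace ℝ (Fin k) :=
    LinearEquiv.ofFinrankEq _ _ (by rw [hfr, finrank_euclideanSpace_fin])
  refine ⟨e.toLinearMap ∘ₗ K.orthogonalProjectionOnto.toLinearMap ∘ₗ LinearMap.id, fun w => ?_⟩
  simp only [LinearMap.comp_apply, LinearMap.id_apply, ContinuousLinearMap.coe_coe,
    LinearEquiv.coe_coe]
  rw [show (0 : EuclideanSpace ℝ (Fin k)) = e 0 by simp, e.injective.eq_iff,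
    Submodule.orthogonalProjectionOnto_eq_zero_iff, hK, Submodule.orthogonal_orthogonal]


section charts
variable {n m : ℕ} {M : Type*} [TopologicalSpace M]
    [ChartedSpace (EuclideanSpace ℝ (Fin n)) M]
    [IsManifold (𝓡 n) (⊤ : ℕ∞) M]
    {f : M → EuclideanSpace ℝ (Fin m)}

theorem lemC (hf : ContMDiff (𝓡 n) 𝓘(ℝ, EuclideanSpace ℝ (Fin m)) (⊤ : ℕ∞) f) (p : M) :
    ContDiffOn ℝ ((⊤ : ℕ∞) : WithTop ℕ∞) (f ∘ (extChartAt (𝓡 n) p).symm)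
      (extChartAt (𝓡 n) p).target := by
  have h := (contMDiffOn_iff.mp (hf.contMDiffOn (s := univ))).2 p (f p)
  simpa [extChartAt_model_space_eq_id, chartAt_self_eq] using h

theorem lemC' (hf : ContMDiff (𝓡 n) 𝓘(ℝ, EuclideanSpace ℝ (Fin m)) (⊤ : ℕ∞) f) (p : M) :
    DifferentiableOn ℝ (f ∘ (extChartAt (𝓡 n) p).symm) (extChartAt (𝓡 n) p).target :=
  (lemC hf p).differentiableOn (by simp)

theorem lemD (hf : ContMDiff (𝓡 n) 𝓘(ℝ, EuclideanSpace ℝ (Fin m)) (⊤ : ℕ∞) f) (p x : M)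
    (hx : x ∈ (chartAt (EuclideanSpace ℝ (Fin n)) p).source) (u : TangentSpace (𝓡 n) x) :
    mfderiv (𝓡 n) 𝓘(ℝ, EuclideanSpace ℝ (Fin m)) f x u
      = fderiv ℝ (f ∘ (extChartAt (𝓡 n) p).symm) (extChartAt (𝓡 n) p x)
          (mfderiv (𝓡 n) 𝓘(ℝ, EuclideanSpace ℝ (Fin n)) (extChartAt (𝓡 n) p) x u) := by
  have hxs : x ∈ (extChartAt (𝓡 n) p).source := by simpa [extChartAt_source] using hx
  have hxt : extChartAt (𝓡 n) p x ∈ (extChartAt (𝓡 n) p).target :=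
    (extChartAt (𝓡 n) p).map_source hxs
  have hgd : DifferentiableAt ℝ (f ∘ (extChartAt (𝓡 n) p).symm) (extChartAt (𝓡 n) p x) :=
    (lemC' hf p).differentiableAt ((isOpen_extChartAt_target p).mem_nhds hxt)
  have heq : f =ᶠ[nhds x] (f ∘ (extChartAt (𝓡 n) p).symm) ∘ (extChartAt (𝓡 n) p) := by
    filter_upwards [(isOpen_extChartAt_source p).mem_nhds hxs] with y hy
    simp only [Function.comp_apply, (extChartAt (𝓡 n) p).left_inv hy]
  have hchart : MDifferentiableAt (𝓡 n) 𝓘(ℝ, EuclideanSpace ℝ (Fin n))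
      (extChartAt (𝓡 n) p) x :=
    (contMDiffAt_extChartAt' (n := ((⊤ : ℕ∞) : WithTop ℕ∞)) hx).mdifferentiableAt (by simp)
  rw [heq.mfderiv_eq, mfderiv_comp x hgd.mdifferentiableAt hchart]
  simp [mfderiv_eq_fderiv]
  rfl
theorem step [CompactSpace M] [Nonempty M] {k : ℕ} (hk : 2 * n + 1 ≤ k)
    (hf : ContMDiff (𝓡 n) 𝓘(ℝ, EuclideanSpace ℝ (Fin m)) (⊤ : ℕ∞) f)
    (L : EuclideanSpace ℝ (Fin m) →ₗ[ℝ] EuclideanSpace ℝ (Fin (k+1)))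
    (hsec : ∀ x y : M, x ≠ y → L (f x - f y) ≠ 0)
    (htan : ∀ (x : M) (u : TangentSpace (𝓡 n) x),
      mfderiv (𝓡 n) 𝓘(ℝ, EuclideanSpace ℝ (Fin m)) f x u ≠ 0 →
      L (mfderiv (𝓡 n) 𝓘(ℝ, EuclideanSpace ℝ (Fin m)) f x u) ≠ 0) :
    ∃ L' : EuclideanSpace ℝ (Fin m) →ₗ[ℝ] EuclideanSpace ℝ (Fin k),
      (∀ x y : M, x ≠ y → L' (f x - f y) ≠ 0) ∧
      (∀ (x : M) (u : TangentSpace (𝓡 n) x),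
        mfderiv (𝓡 n) 𝓘(ℝ, EuclideanSpace ℝ (Fin m)) f x u ≠ 0 →
        L' (mfderiv (𝓡 n) 𝓘(ℝ, EuclideanSpace ℝ (Fin m)) f x u) ≠ 0) := by
  classical
  set I := (𝓡 n) with hI
  set En := EuclideanSpace ℝ (Fin n)
  -- continuous version of L
  let Lc : EuclideanSpace ℝ (Fin m) →L[ℝ] EuclideanSpace ℝ (Fin (k+1)) :=
    ⟨L, L.continuous_of_finiteDimensional⟩
  -- finite chart cover
  obtain ⟨F, hF⟩ := IsCompact.elim_finite_subcover (isCompact_univ (X := M))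
    (fun p : M => (chartAt En p).source) (fun p => (chartAt En p).open_source)
    (fun x _ => mem_iUnion.2 ⟨x, mem_chart_source En x⟩)
  have cover : ∀ x : M, ∃ p ∈ F, x ∈ (chartAt En p).source := by
    intro x
    have := hF (mem_univ x)
    simpa using this
  -- secant maps
  let G : M → M → ℝ × (En × En) → EuclideanSpace ℝ (Fin (k+1)) := fun p q z =>
    z.1 • Lc (f ((extChartAt I p).symm z.2.1) - f ((extChartAt I q).symm z.2.2))
  let sG : M → M → Set (ℝ × (En × En)) := fun p q =>
    univ ×ˢ ((extChartAt I p).target ×ˢ (extChartAt I q).target)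
  have hsGopen : ∀ p q, IsOpen (sG p q) := fun p q =>
    isOpen_univ.prod ((isOpen_extChartAt_target p).prod (isOpen_extChartAt_target q))
  have hGdiff : ∀ p q, DifferentiableOn ℝ (G p q) (sG p q) := by
    intro p q
    have h1 : DifferentiableOn ℝ (fun z : ℝ × (En × En) =>
        (f ∘ (extChartAt I p).symm) z.2.1) (sG p q) := by
      apply (lemC' hf p).comp (differentiable_snd.fst.differentiableOn)
      rintro ⟨t, a, b⟩ ⟨-, ha, -⟩
      exact ha
    have h2 : DifferentiableOn ℝ (fun z : ℝ × (En × En) =>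
        (f ∘ (extChartAt I q).symm) z.2.2) (sG p q) := by
      apply (lemC' hf q).comp (differentiable_snd.snd.differentiableOn)
      rintro ⟨t, a, b⟩ ⟨-, -, hb⟩
      exact hb
    exact (differentiable_fst.differentiableOn).smul
      ((Lc.differentiable.comp_differentiableOn (h1.sub h2)))
  -- tangent maps
  let H : M → ℝ × (En × En) → EuclideanSpace ℝ (Fin (k+1)) := fun p z =>
    z.1 • Lc (fderiv ℝ (f ∘ (extChartAt I p).symm) z.2.1 z.2.2)
  let sH : M → Set (ℝ × (En × En)) := fun p =>
    univ ×ˢ ((extChartAt I p).target ×ˢ univ)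
  have hsHopen : ∀ p, IsOpen (sH p) := fun p =>
    isOpen_univ.prod ((isOpen_extChartAt_target p).prod isOpen_univ)
  have hHdiff : ∀ p, DifferentiableOn ℝ (H p) (sH p) := by
    intro p
    have hfd : DifferentiableOn ℝ (fderiv ℝ (f ∘ (extChartAt I p).symm))
        (extChartAt I p).target := by
      have h := ((contDiffOn_infty_iff_fderiv_of_isOpen
        (isOpen_extChartAt_target p)).1 (lemC hf p)).2
      exact h.differentiableOn (by simp)
    have h1 : DifferentiableOn ℝ (fun z : ℝ × (En × En) =>
        fderiv ℝ (f ∘ (extChartAt I p).symm) z.2.1) (sH p) := by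
      apply hfd.comp (differentiable_snd.fst.differentiableOn)
      rintro ⟨t, a, b⟩ ⟨-, ha, -⟩
      exact ha
    have h2 : DifferentiableOn ℝ (fun z : ℝ × (En × En) =>
        fderiv ℝ (f ∘ (extChartAt I p).symm) z.2.1 z.2.2) (sH p) :=
      h1.clm_apply (differentiable_snd.snd.differentiableOn)
    exact (differentiable_fst.differentiableOn).smul
      (Lc.differentiable.comp_differentiableOn h2)
  -- the bad set
  let Bad : Set (EuclideanSpace ℝ (Fin (k+1))) :=
    (⋃ p ∈ F, ⋃ q ∈ F, G p q '' sG p q) ∪ (⋃ p ∈ F, H p '' sH p)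
  have hBad : volume Bad = 0 := by
    apply measure_union_null
    · refine (measure_biUnion_null_iff F.countable_toSet).2 fun p _ => ?_
      refine (measure_biUnion_null_iff F.countable_toSet).2 fun q _ => ?_
      exact lemB (Nat.lt_succ_of_le hk) _ _ (hsGopen p q) (hGdiff p q)
    · refine (measure_biUnion_null_iff F.countable_toSet).2 fun p _ => ?_
      exact lemB (Nat.lt_succ_of_le hk) _ _ (hsHopen p) (hHdiff p)
  -- pick a good vector
  have hv : ∃ v, v ∉ Bad := by
    by_contra hcon
    push_neg at hcon
    have : (univ : Set (EuclideanSpace ℝ (Fin (k+1)))) ⊆ Bad := fun v _ => hcon v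
    have h0 := measure_mono_null this hBad
    have hpos : (0 : ℝ≥0∞) < volume (univ : Set (EuclideanSpace ℝ (Fin (k+1)))) :=
      isOpen_univ.measure_pos volume univ_nonempty
    rw [h0] at hpos
    exact lt_irrefl _ hpos
  obtain ⟨v, hv⟩ := hv
  -- v ≠ 0
  have hv0 : v ≠ 0 := by
    rintro rfl
    apply hv
    obtain ⟨x0⟩ := ‹Nonempty M›
    obtain ⟨p, hpF, hxp⟩ := cover x0
    refine Or.inl (mem_biUnion hpF (mem_biUnion hpF ?_))
    refine ⟨(0, extChartAt I p x0, extChartAt I p x0), ?_, by simp [G]⟩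
    have hxt : extChartAt I p x0 ∈ (extChartAt I p).target :=
      (extChartAt I p).map_source (by simpa [extChartAt_source] using hxp)
    exact ⟨mem_univ _, hxt, hxt⟩
  obtain ⟨π, hπ⟩ := lemProj v hv0
  refine ⟨π.comp L, ?_, ?_⟩
  · intro x y hxy hcontra
    have hmem : L (f x - f y) ∈ Submodule.span ℝ {v} := (hπ _).1 hcontra
    obtain ⟨c, hc⟩ := Submodule.mem_span_singleton.1 hmem
    have hc0 : c ≠ 0 := by
      rintro rfl
      exact hsec x y hxy (by simpa using hc.symm)
    have hveq : v = c⁻¹ • L (f x - f y) := by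
      rw [← hc, smul_smul, inv_mul_cancel₀ hc0, one_smul]
    apply hv
    obtain ⟨p, hpF, hxp⟩ := cover x
    obtain ⟨q, hqF, hyq⟩ := cover y
    refine Or.inl (mem_biUnion hpF (mem_biUnion hqF ?_))
    refine ⟨(c⁻¹, extChartAt I p x, extChartAt I q y), ?_, ?_⟩
    · exact ⟨mem_univ _,
        (extChartAt I p).map_source (by simpa [extChartAt_source] using hxp),
        (extChartAt I q).map_source (by simpa [extChartAt_source] using hyq)⟩
    · show c⁻¹ • Lc (f ((extChartAt I p).symm (extChartAt I p x))
        - f ((extChartAt I q).symm (extChartAt I q y))) = v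
      rw [(extChartAt I p).left_inv (by simpa [extChartAt_source] using hxp),
        (extChartAt I q).left_inv (by simpa [extChartAt_source] using hyq)]
      exact hveq.symm
  · intro x u hu hcontra
    have hmem : L (mfderiv I 𝓘(ℝ, EuclideanSpace ℝ (Fin m)) f x u) ∈ Submodule.span ℝ {v} :=
      (hπ _).1 hcontra
    obtain ⟨c, hc⟩ := Submodule.mem_span_singleton.1 hmem
    have hc0 : c ≠ 0 := by
      rintro rfl
      exact htan x u hu (by simpa using hc.symm)
    have hveq : v = c⁻¹ • L (mfderiv I 𝓘(ℝ, EuclideanSpace ℝ (Fin m)) f x u) := by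
      rw [← hc, smul_smul, inv_mul_cancel₀ hc0, one_smul]
    apply hv
    obtain ⟨p, hpF, hxp⟩ := cover x
    refine Or.inr (mem_biUnion hpF ?_)
    refine ⟨(c⁻¹, extChartAt I p x,
      mfderiv I 𝓘(ℝ, En) (extChartAt I p) x u), ?_, ?_⟩
    · exact ⟨mem_univ _,
        (extChartAt I p).map_source (by simpa [extChartAt_source] using hxp), mem_univ _⟩
    · show c⁻¹ • Lc (fderiv ℝ (f ∘ (extChartAt I p).symm) (extChartAt I p x)
        (mfderiv I 𝓘(ℝ, En) (extChartAt I p) x u)) = v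
      rw [← lemD hf p x hxp u]
      exact hveq.symm
end charts


section main
variable {n m : ℕ} {M : Type*} [TopologicalSpace M]
    [ChartedSpace (EuclideanSpace ℝ (Fin n)) M]
    [IsManifold (𝓡 n) (⊤ : ℕ∞) M]
    {f : M → EuclideanSpace ℝ (Fin m)}

theorem down [CompactSpace M] [Nonempty M]
    (hf : ContMDiff (𝓡 n) 𝓘(ℝ, EuclideanSpace ℝ (Fin m)) (⊤ : ℕ∞) f)
    (hinj : Function.Injective f)
    (d : ℕ) :
    ∀ k : ℕ, m = k + d → 2 * n + 1 ≤ k →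
    ∃ L : EuclideanSpace ℝ (Fin m) →ₗ[ℝ] EuclideanSpace ℝ (Fin k),
      (∀ x y : M, x ≠ y → L (f x - f y) ≠ 0) ∧
      (∀ (x : M) (u : TangentSpace (𝓡 n) x),
        mfderiv (𝓡 n) 𝓘(ℝ, EuclideanSpace ℝ (Fin m)) f x u ≠ 0 →
        L (mfderiv (𝓡 n) 𝓘(ℝ, EuclideanSpace ℝ (Fin m)) f x u) ≠ 0) := by
  induction d with
  | zero =>
    intro k hmk _
    have hkm : k = m := by omega
    subst hkm
    refine ⟨LinearMap.id, fun x y hxy => ?_, fun x u hu => ?_⟩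
    · simpa [sub_ne_zero] using fun h => hxy (hinj h)
    · exact hu
  | succ d ih =>
    intro k hmk hk
    obtain ⟨L, hsec, htan⟩ := ih (k + 1) (by omega) (by omega)
    exact step hk hf L hsec htan
end main

open scoped Manifold in
/-- If `f : M → ℝ^m` is a smooth embedding of a compact smooth `n`-manifold
without boundary and `m ≥ 2n + 2`, then there is a linear map
`L : ℝ^m → ℝ^(2n+1)` such that `L ∘ f` is injective and an immersion;
i.e., `L` kills no secant `f x - f y` (`x ≠ y`) and no nonzero tangent vector
`mfderiv f x u`. -/
theorem stmt1 (n m : ℕ) (hm : 2 * n + 2 ≤ m) (M : Type*) [TopologicalSpace M]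
    [ChartedSpace (EuclideanSpace ℝ (Fin n)) M]
    [IsManifold (𝓡 n) (⊤ : ℕ∞) M] [CompactSpace M] [T2Space M]
    (f : M → EuclideanSpace ℝ (Fin m))
    (hf_smooth : ContMDiff (𝓡 n) 𝓘(ℝ, EuclideanSpace ℝ (Fin m)) (⊤ : ℕ∞) f)
    (hf_emb : Topology.IsEmbedding f)
    (hf_imm : ∀ x : M, Function.Injective
      (mfderiv (𝓡 n) 𝓘(ℝ, EuclideanSpace ℝ (Fin m)) f x)) :
    ∃ L : EuclideanSpace ℝ (Fin m) →ₗ[ℝ] EuclideanSpace ℝ (Fin (2 * n + 1)),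
      Function.Injective (fun x : M => L (f x)) ∧
      (∀ x : M, Function.Injective
        (mfderiv (𝓡 n) 𝓘(ℝ, EuclideanSpace ℝ (Fin (2 * n + 1)))
          (fun x : M => L (f x)) x)) ∧
      (∀ x y : M, x ≠ y → L (f x - f y) ≠ 0) ∧
      (∀ (x : M) (u : TangentSpace (𝓡 n) x),
        mfderiv (𝓡 n) 𝓘(ℝ, EuclideanSpace ℝ (Fin m)) f x u ≠ 0 →
        L (mfderiv (𝓡 n) 𝓘(ℝ, EuclideanSpace ℝ (Fin m)) f x u) ≠ 0) := by
  cases isEmpty_or_nonempty M with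
  | inl h =>
    exact ⟨0, fun x => (IsEmpty.false x).elim, fun x => (IsEmpty.false x).elim,
      fun x => (IsEmpty.false x).elim, fun x => (IsEmpty.false x).elim⟩
  | inr h =>
    obtain ⟨L, hsec, htan⟩ := down hf_smooth hf_emb.injective (m - (2 * n + 1))
      (2 * n + 1) (by omega) (by omega)
    refine ⟨L, ?_, ?_, hsec, htan⟩
    · intro x y hxy
      by_contra hne
      apply hsec x y hne
      simp only [map_sub]
      rw [sub_eq_zero]
      exact hxy
    · intro x
      set I := (𝓡 n)
      set J := 𝓘(ℝ, EuclideanSpace ℝ (Fin m))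
      set J' := 𝓘(ℝ, EuclideanSpace ℝ (Fin (2 * n + 1)))
      let Lc : EuclideanSpace ℝ (Fin m) →L[ℝ] EuclideanSpace ℝ (Fin (2 * n + 1)) :=
        ⟨L, L.continuous_of_finiteDimensional⟩
      have hfd : MDifferentiableAt I J f x :=
        hf_smooth.mdifferentiableAt (by simp)
      have hcomp : mfderiv I J' (fun x : M => L (f x)) x
          = (Lc : EuclideanSpace ℝ (Fin m) →L[ℝ] _).comp
              (mfderiv I J f x) := by
        have h1 : mfderiv I J' ((Lc : EuclideanSpace ℝ (Fin m) →
              EuclideanSpace ℝ (Fin (2 * n + 1))) ∘ f) x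
            = (mfderiv J J' (Lc : EuclideanSpace ℝ (Fin m) →
                EuclideanSpace ℝ (Fin (2 * n + 1))) (f x)).comp (mfderiv I J f x) :=
          mfderiv_comp x (Lc.differentiableAt.mdifferentiableAt) hfd
        have h2 : mfderiv J J' (Lc : EuclideanSpace ℝ (Fin m) →
            EuclideanSpace ℝ (Fin (2 * n + 1))) (f x) = Lc := by
          rw [mfderiv_eq_fderiv, Lc.fderiv]
        rw [← h2]
        exact h1
      intro u w huw
      have h3 : L (mfderiv I J f x u - mfderiv I J f x w) = 0 := by
        have : Lc (mfderiv I J f x u) = Lc (mfderiv I J f x w) := by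
          have hu' := congrArg (fun q => q) huw
          rw [hcomp] at huw
          exact huw
        exact (map_sub L _ _).trans (sub_eq_zero.2 this)
      have h4 : mfderiv I J f x u - mfderiv I J f x w = 0 := by
        by_contra hne
        have h5 : mfderiv I J f x (u - w) ≠ 0 := by
          rwa [map_sub]
        exact htan x (u - w) h5 (by rwa [map_sub])
      have h6 : mfderiv I J f x (u - w) = mfderiv I J f x 0 := by
        rw [map_sub, map_zero]
        exact h4
      have h7 : u - w = 0 := hf_imm x h6
      exact sub_eq_zero.1 h7
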